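/- For all n ≥ 2, a(n) = 3n/16 + 9/64 - (ψ(n-2) + 3ψ(n-1))/2^(n+4). -/
import Mathlib


theorem stmt_3
    (psi : ℕ → ℤ)
    (hpsi0 : psi 0 = 1) (hpsi1 : psi 1 = 0)
    (hpsi : ∀ n : ℕ, 2 ≤ n → psi n = -2 * psi (n - 2) - psi (n - 1))
    (i a : ℕ → ℚ)
    (ha0 : a 0 = 0) (hi1 : i 1 = 1) (ha1 : a 1 = 0)
    (ha : ∀ n : ℕ, 2 ≤ n → a n = (i (n - 1) + a (n - 1)) / 2)
    (hi23 : ∀ n : ℕ, 2 ≤ n → n ≤ 3 → i n = i (n - 1))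
    (hi4 : i 4 = (i 1 + a 1 + i 2 + a 2) / 2)
    (hi5 : ∀ n : ℕ, 5 ≤ n → i n = (i 2 + a 2 + i (n - 3) + a (n - 3)) / 2) :
    ∀ n : ℕ, 2 ≤ n →
      a n = 3 * n / 16 + 9 / 64 - ((psi (n - 2) : ℚ) + 3 * psi (n - 1)) / 2 ^ (n + 4) := by
  have hpsi' : ∀ m : ℕ, psi (m + 2) = -2 * psi m - psi (m + 1) := by
    intro m
    have := hpsi (m + 2) (by omega)
    simpa using this
  have hpsi2 : psi 2 = -2 := by have h := hpsi' 0; norm_num at h; omega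
  have hpsi3 : psi 3 = 2 := by have h := hpsi' 1; norm_num at h; omega
  have hi2 : i 2 = 1 := by have := hi23 2 (by omega) (by omega); simpa [hi1] using this
  have hi3 : i 3 = 1 := by have := hi23 3 (by omega) (by omega); simpa [hi2] using this
  have ha2 : a 2 = 1/2 := by have := ha 2 (by omega); rw [this]; norm_num [hi1, ha1]
  have ha3 : a 3 = 3/4 := by have := ha 3 (by omega); rw [this]; norm_num [hi2, ha2]
  have ha4 : a 4 = 7/8 := by have := ha 4 (by omega); rw [this]; norm_num [hi3, ha3]
  have hi4' : i 4 = 5/4 := by rw [hi4]; norm_num [hi1, ha1, hi2, ha2]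
  have key : ∀ m : ℕ,
      a (m + 2) = 3 * (m + 2) / 16 + 9 / 64 - ((psi m : ℚ) + 3 * psi (m + 1)) / 2 ^ (m + 6)
      ∧ i (m + 2) = 3 * (m + 4) / 16 + 9 / 64 + (7 * (psi m : ℚ) + 5 * psi (m + 1)) / 2 ^ (m + 6) := by
    intro m
    induction m using Nat.strong_induction_on with
    | _ m ih =>
      match m with
      | 0 => norm_num [ha2, hi2, hpsi0, hpsi1]
      | 1 => norm_num [ha3, hi3, hpsi1, hpsi2]
      | 2 => norm_num [ha4, hi4', hpsi2, hpsi3]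
      | (k + 3) =>
        have e2 : psi (k + 2) = -2 * psi k - psi (k + 1) := hpsi' k
        have e3 : psi (k + 3) = -2 * psi (k + 1) - psi (k + 2) := hpsi' (k + 1)
        have e4 : psi (k + 4) = -2 * psi (k + 2) - psi (k + 3) := hpsi' (k + 2)
        obtain ⟨ihA, ihI⟩ := ih (k + 2) (by omega)
        obtain ⟨ihA0, ihI0⟩ := ih k (by omega)
        have ha5 : a (k + 5) = (i (k + 4) + a (k + 4)) / 2 := by
          have := ha (k + 5) (by omega)
          simpa using this
        have hi5' : i (k + 5) = (i 2 + a 2 + i (k + 2) + a (k + 2)) / 2 := by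
          have := hi5 (k + 5) (by omega)
          simpa using this
        constructor
        · show a (k + 5) = _
          rw [ha5, show (k+4) = (k+2)+2 from rfl] at *
          rw [ihA, ihI, e4, e3, e2]
          have h6 : (2:ℚ) ^ (k + 2 + 6) ≠ 0 := by positivity
          have h9 : (2:ℚ) ^ (k + 3 + 6) ≠ 0 := by positivity
          push_cast
          field_simp
          ring
        · show i (k + 5) = _
          rw [show k+3+1 = k+4 from rfl]
          rw [hi5', ihA0, ihI0, e4, e3, e2, hi2, ha2]
          have h6 : (2:ℚ) ^ (k + 6) ≠ 0 := by positivity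
          have h9 : (2:ℚ) ^ (k + 3 + 6) ≠ 0 := by positivity
          push_cast
          field_simp
          ring
  intro n hn
  obtain ⟨m, rfl⟩ : ∃ m, n = m + 2 := ⟨n - 2, by omega⟩
  have h := (key m).1
  have e1 : m + 2 - 2 = m := by omega
  have e2 : m + 2 - 1 = m + 1 := by omega
  rw [e1, e2]
  rw [h]
  push_cast
  ring
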